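/- If γ : [0,1] → ℝ² is continuous and of bounded variation (its total variation eVariationOn γ [0,1] is finite), then the image γ([0,1]) has two-dimensional Lebesgue measure zero. -/
import Mathlib

open MeasureTheory
set_option maxHeartbeats 1000000

/-- The image of a rectifiable curve (continuous, of bounded variation) in the plane has
two-dimensional Lebesgue measure zero. -/
theorem rectifiable_curve_image_null (γ : ℝ → ℝ × ℝ)
    (hc : ContinuousOn γ (Set.Icc 0 1))
    (hbv : eVariationOn γ (Set.Icc 0 1) < ⊤) :
    volume (γ '' Set.Icc 0 1) = 0 := by
  set s : Set ℝ := Set.Icc 0 1 with hs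
  have hlbv : LocallyBoundedVariationOn γ s := fun a b _ _ =>
    lt_of_le_of_lt (eVariationOn.mono γ Set.inter_subset_left) hbv |>.ne
  set v : ℝ → ℝ := fun t => variationOnFromTo γ s 0 t with hv
  -- `v` gives back distances: dist (γ a) (γ b) ≤ |v b - v a|
  have key : ∀ a ∈ s, ∀ b ∈ s, dist (γ a) (γ b) ≤ |v b - v a| := by
    have base : ∀ a ∈ s, ∀ b ∈ s, a ≤ b → dist (γ a) (γ b) ≤ |v b - v a| := by
      intro a ha b hb hab
      have h0 : (0 : ℝ) ∈ s := Set.left_mem_Icc.2 zero_le_one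
      have hadd : variationOnFromTo γ s 0 a + variationOnFromTo γ s a b
          = variationOnFromTo γ s 0 b := variationOnFromTo.add hlbv h0 ha hb
      have hvb : v b - v a = variationOnFromTo γ s a b := by
        simp only [hv]; linarith
      have h1 : variationOnFromTo γ s a b = (eVariationOn γ (s ∩ Set.Icc a b)).toReal :=
        variationOnFromTo.eq_of_le γ s hab
      have h2 : edist (γ a) (γ b) ≤ eVariationOn γ (s ∩ Set.Icc a b) :=
        eVariationOn.edist_le γ ⟨ha, le_rfl, hab⟩ ⟨hb, hab, le_rfl⟩
      have hfin : eVariationOn γ (s ∩ Set.Icc a b) ≠ ⊤ := hlbv a b ha hb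
      rw [hvb, h1, abs_of_nonneg ENNReal.toReal_nonneg]
      rw [edist_dist] at h2
      exact (ENNReal.ofReal_le_iff_le_toReal hfin).1 h2
    intro a ha b hb
    rcases le_total a b with hab | hab
    · exact base a ha b hb hab
    · rw [dist_comm, abs_sub_comm]; exact base b hb a ha hab
  -- factor γ = g ∘ v with g 1-Lipschitz on v '' s
  set φ : ℝ → ℝ := Function.invFunOn v s with hφ
  set g : ℝ → ℝ × ℝ := γ ∘ φ with hg
  have himg : γ '' s = g '' (v '' s) := by
    rw [← Set.image_comp]
    apply Set.image_congr
    intro t ht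
    have h1 : φ (v t) ∈ s := Function.invFunOn_mem ⟨t, ht, rfl⟩
    have h2 : v (φ (v t)) = v t := Function.invFunOn_eq ⟨t, ht, rfl⟩
    have := key (φ (v t)) h1 t ht
    rw [h2, sub_self, abs_zero] at this
    simp only [hg, Function.comp_apply]
    exact (dist_le_zero.1 this).symm
  have hlip : LipschitzOnWith 1 g (v '' s) := by
    apply LipschitzOnWith.of_dist_le_mul
    rintro x ⟨a, ha, rfl⟩ y ⟨b, hb, rfl⟩
    have ha1 : φ (v a) ∈ s := Function.invFunOn_mem ⟨a, ha, rfl⟩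
    have ha2 : v (φ (v a)) = v a := Function.invFunOn_eq ⟨a, ha, rfl⟩
    have hb1 : φ (v b) ∈ s := Function.invFunOn_mem ⟨b, hb, rfl⟩
    have hb2 : v (φ (v b)) = v b := Function.invFunOn_eq ⟨b, hb, rfl⟩
    have := key (φ (v a)) ha1 (φ (v b)) hb1
    rw [ha2, hb2] at this
    simpa [hg, Real.dist_eq, abs_sub_comm] using this
  -- Hausdorff dimension of the image is ≤ 1 < 2
  have hdim : dimH (γ '' s) ≤ 1 := by
    rw [himg]
    calc dimH (g '' (v '' s)) ≤ dimH (v '' s) := hlip.dimH_image_le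
      _ ≤ dimH (Set.univ : Set ℝ) := dimH_mono (Set.subset_univ _)
      _ = 1 := Real.dimH_univ
  rw [← MeasureTheory.hausdorffMeasure_prod_real]
  have h2 : ((2 : NNReal) : ℝ) = 2 := by norm_num
  rw [← h2]
  refine hausdorffMeasure_of_dimH_lt ?_
  refine lt_of_le_of_lt hdim ?_
  norm_num
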